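/- Let m ≥ 1 and Δ ≥ 1 be integers, let X ⊆ ℤ^m be a finite set of vectors with all entries in {−Δ,…,Δ}, and let x ∈ X be such that −x ∈ cone(X \ {x}). Then there exist nonnegative integers (λ_y)_{y∈X} such that λ_x ≥ 1, at most m+1 of the λ_y are nonzero, λ_y ≤ Δ^m · m^{m/2} for every y ∈ X, and −λ_x · x = Σ_{y ∈ X \ {x}} λ_y · y. -/

import Mathlib

open Matrix in
lemma hadamard_det_bound {k : ℕ} (hk : 0 < k) (M : Matrix (Fin k) (Fin k) ℝ) (Δ : ℝ)
    (h : ∀ i j, |M i j| ≤ Δ) : |M.det| ≤ Δ ^ k * (k : ℝ) ^ ((k : ℝ) / 2) := by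
  have hΔ0 : 0 ≤ Δ := le_trans (abs_nonneg _) (h ⟨0, hk⟩ ⟨0, hk⟩)
  set P : Matrix (Fin k) (Fin k) ℝ := Mᴴ * M with hPdef
  have hps : P.PosSemidef := Matrix.posSemidef_conjTranspose_mul_self M
  have hherm := hps.1
  have heig : ∀ i, 0 ≤ hherm.eigenvalues i := hps.eigenvalues_nonneg
  have hdetP : P.det = ∏ i, hherm.eigenvalues i := by
    simpa using hherm.det_eq_prod_eigenvalues
  have htr : P.trace = ∑ i, hherm.eigenvalues i := by
    nth_rewrite 1 [hherm.spectral_theorem]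
    rw [Unitary.conjStarAlgAut_apply, Matrix.trace_mul_cycle, Unitary.coe_star_mul_self, Matrix.one_mul,
      Matrix.trace_diagonal]
    simp
  have htrb : P.trace ≤ (k : ℝ) * ((k : ℝ) * Δ ^ 2) := by
    have hPd : ∀ i, P i i ≤ (k : ℝ) * Δ ^ 2 := by
      intro i
      have : P i i = ∑ l, M l i * M l i := by
        simp [hPdef, Matrix.mul_apply, Matrix.conjTranspose_apply]
      rw [this]
      calc ∑ l, M l i * M l i ≤ ∑ _l : Fin k, Δ ^ 2 := by
            refine Finset.sum_le_sum fun l _ => ?_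
            calc M l i * M l i = |M l i| * |M l i| := (abs_mul_abs_self _).symm
              _ ≤ Δ * Δ := mul_self_le_mul_self (abs_nonneg _) (h l i)
              _ = Δ ^ 2 := (sq Δ).symm
        _ = (k : ℝ) * Δ ^ 2 := by simp [mul_comm]
    calc P.trace = ∑ i, P i i := by simp [Matrix.trace, Matrix.diag]
      _ ≤ ∑ _i : Fin k, (k : ℝ) * Δ ^ 2 := Finset.sum_le_sum fun i _ => hPd i
      _ = (k : ℝ) * ((k : ℝ) * Δ ^ 2) := by simp [mul_comm]
  have hk0 : (k : ℝ) ≠ 0 := Nat.cast_ne_zero.mpr hk.ne'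
  have hamgm := Real.geom_mean_le_arith_mean_weighted Finset.univ (fun _ => (k : ℝ)⁻¹)
    hherm.eigenvalues (fun i _ => by positivity)
    (by simp [Finset.card_univ, mul_comm]; field_simp) (fun i _ => heig i)
  have hQ : (∏ i, hherm.eigenvalues i ^ ((k : ℝ)⁻¹)) ≤ (k : ℝ) * Δ ^ 2 := by
    refine hamgm.trans ?_
    rw [← Finset.mul_sum, ← htr]
    calc (k : ℝ)⁻¹ * P.trace ≤ (k : ℝ)⁻¹ * ((k : ℝ) * ((k : ℝ) * Δ ^ 2)) := by
          refine mul_le_mul_of_nonneg_left htrb (by positivity)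
      _ = (k : ℝ) * Δ ^ 2 := by field_simp
  have hprod : ∏ i, hherm.eigenvalues i ≤ ((k : ℝ) * Δ ^ 2) ^ k := by
    have hQ0 : 0 ≤ ∏ i, hherm.eigenvalues i ^ ((k : ℝ)⁻¹) :=
      Finset.prod_nonneg fun i _ => Real.rpow_nonneg (heig i) _
    calc ∏ i, hherm.eigenvalues i
        = (∏ i, hherm.eigenvalues i ^ ((k : ℝ)⁻¹)) ^ k := by
          rw [← Finset.prod_pow]
          exact (Finset.prod_congr rfl fun i _ =>
            (Real.rpow_inv_natCast_pow (heig i) hk.ne').symm)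
      _ ≤ ((k : ℝ) * Δ ^ 2) ^ k := pow_le_pow_left₀ hQ0 hQ k
  have hd2 : |M.det| ^ 2 ≤ ((k : ℝ) * Δ ^ 2) ^ k := by
    have hPM : P.det = M.det * M.det := by
      rw [hPdef, Matrix.det_mul, Matrix.conjTranspose_eq_transpose_of_trivial,
        Matrix.det_transpose]
    calc |M.det| ^ 2 = P.det := by rw [sq_abs, hPM, sq]
      _ = ∏ i, hherm.eigenvalues i := hdetP
      _ ≤ ((k : ℝ) * Δ ^ 2) ^ k := hprod
  have hRHS0 : 0 ≤ Δ ^ k * (k : ℝ) ^ ((k : ℝ) / 2) := by positivity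
  have hRHS : (Δ ^ k * (k : ℝ) ^ ((k : ℝ) / 2)) ^ 2 = ((k : ℝ) * Δ ^ 2) ^ k := by
    rw [mul_pow, mul_pow]
    rw [← Real.rpow_natCast ((k : ℝ) ^ ((k : ℝ) / 2)) 2, ← Real.rpow_mul (Nat.cast_nonneg k)]
    rw [← Real.rpow_natCast (k : ℝ) k]
    ring_nf
  nlinarith [hd2, hRHS, abs_nonneg M.det, hRHS0]


section Carath
variable {V : Type*} [AddCommGroup V] [Module ℝ V] [DecidableEq V]

lemma carath_step (t : Finset V) (f : V → ℝ) (hf : ∀ v, 0 ≤ f v) (hft : ∀ v ∉ t, f v = 0)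
    (D : V → ℝ) (hD0 : ∀ v ∉ t, D v = 0) (hDsum : ∑ v ∈ t, D v • v = 0)
    (v₀ : V) (hv₀t : v₀ ∈ t) (hv₀ : 0 < D v₀) :
    ∃ w ∈ t, ∃ f' : V → ℝ, (∀ v, 0 ≤ f' v) ∧ (∀ v ∉ t.erase w, f' v = 0) ∧
      ∑ v ∈ t.erase w, f' v • v = ∑ v ∈ t, f v • v := by
  classical
  set P := t.filter (fun v => 0 < D v) with hP
  obtain ⟨w, hwP, hw⟩ := P.exists_min_image (fun v => f v / D v) ⟨v₀, by simp [hP, hv₀t, hv₀]⟩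
  obtain ⟨hwt, hDw⟩ := Finset.mem_filter.mp hwP
  set α := f w / D w with hα
  have hα0 : 0 ≤ α := div_nonneg (hf w) hDw.le
  refine ⟨w, hwt, fun v => f v - α * D v, ?_, ?_, ?_⟩
  · intro v
    show 0 ≤ f v - α * D v
    by_cases hv : 0 < D v
    · by_cases hvt : v ∈ t
      · have hvP : v ∈ P := Finset.mem_filter.mpr ⟨hvt, hv⟩
        have h2 := hw v hvP
        rw [le_div_iff₀ hv] at h2
        linarith
      · rw [hD0 v hvt]; simpa using hf v
    · have h2 : 0 ≤ α * (-D v) := mul_nonneg hα0 (by linarith [not_lt.mp hv])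
      have := hf v
      nlinarith
  · intro v hv
    show f v - α * D v = 0
    by_cases hvw : v = w
    · subst hvw
      simp only [hα]
      field_simp; ring
    · have hvt : v ∉ t := fun h => hv (Finset.mem_erase.mpr ⟨hvw, h⟩)
      rw [hft v hvt, hD0 v hvt]; ring
  · rw [Finset.sum_erase _ (by
      show (f w - α * D w) • w = 0
      have : f w - α * D w = 0 := by simp only [hα]; field_simp; ring
      rw [this, zero_smul])]
    have : ∑ v ∈ t, (f v - α * D v) • v
        = ∑ v ∈ t, f v • v - α • ∑ v ∈ t, D v • v := by
      rw [Finset.smul_sum, ← Finset.sum_sub_distrib]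
      refine Finset.sum_congr rfl fun v _ => ?_
      rw [sub_smul, smul_smul]
    rw [this, hDsum, smul_zero, sub_zero]

lemma carath_cone : ∀ (n : ℕ) (t : Finset V), t.card ≤ n → ∀ f : V → ℝ, (∀ v, 0 ≤ f v) →
    (∀ v ∉ t, f v = 0) →
    ∃ (s : Finset V) (g : V → ℝ), ↑s ⊆ (t : Set V) ∧
      LinearIndependent ℝ ((↑) : ↥(↑s : Set V) → V) ∧ (∀ v, 0 ≤ g v) ∧ (∀ v ∉ s, g v = 0) ∧
      ∑ v ∈ s, g v • v = ∑ v ∈ t, f v • v := by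
  intro n
  induction n with
  | zero =>
    intro t ht f hf hft
    have : t = ∅ := Finset.card_eq_zero.mp (Nat.le_zero.mp ht)
    subst this
    refine ⟨∅, f, by simp, ?_, hf, fun v _ => hft v (by simp), rfl⟩
    rw [Finset.coe_empty]
    exact linearIndependent_empty ℝ V
  | succ n ih =>
    intro t ht f hf hft
    classical
    by_cases hli : LinearIndependent ℝ ((↑) : ↥((t : Set V)) → V)
    · exact ⟨t, f, subset_rfl, hli, hf, hft, rfl⟩
    · rw [Fintype.not_linearIndependent_iff] at hli
      obtain ⟨d, hdsum, i₀, hi₀⟩ := hli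
      set D : V → ℝ := fun v => if h : v ∈ (t : Set V) then d ⟨v, h⟩ else 0 with hD
      have hD0 : ∀ v ∉ t, D v = 0 := fun v hv => dif_neg (by simpa using hv)
      have hDt : ∀ i : ↥((t : Set V)), D ↑i = d i := by
        intro i; simp only [hD]; rw [dif_pos i.2]
      have hDsum : ∑ v ∈ t, D v • v = 0 := by
        calc ∑ v ∈ t, D v • v = ∑ i : {x // x ∈ t}, D ↑i • (↑i : V) :=
              (Finset.sum_coe_sort t (fun v => D v • v)).symm
          _ = ∑ i : ↥((t : Set V)), d i • (↑i : V) := by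
              refine Fintype.sum_equiv (Equiv.subtypeEquivRight
                (fun v => Finset.mem_coe.symm)) _ _ (fun i => ?_)
              rw [← hDt ((Equiv.subtypeEquivRight (fun v => Finset.mem_coe.symm)) i)]
              exact rfl
          _ = 0 := hdsum
      have hmem : (↑i₀ : V) ∈ t := i₀.2
      have key : ∃ w ∈ t, ∃ f' : V → ℝ, (∀ v, 0 ≤ f' v) ∧ (∀ v ∉ t.erase w, f' v = 0) ∧
          ∑ v ∈ t.erase w, f' v • v = ∑ v ∈ t, f v • v := by
        rcases (hi₀ : d i₀ ≠ 0).lt_or_gt with hneg | hpos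
        · refine carath_step t f hf hft (fun v => -D v)
            (fun v hv => by show -D v = 0; rw [hD0 v hv]; ring)
            (by simpa using hDsum) ↑i₀ hmem ?_
          show 0 < -D ↑i₀
          rw [hDt i₀]; linarith
        · exact carath_step t f hf hft D hD0 hDsum ↑i₀ hmem (by rw [hDt i₀]; exact hpos)
      obtain ⟨w, hwt, f', hf', hf't, hsum⟩ := key
      have hcard : (t.erase w).card ≤ n := by
        rw [Finset.card_erase_of_mem hwt]
        omega
      obtain ⟨s, g, hsub, hli', hg, hg0, hgsum⟩ := ih (t.erase w) hcard f' hf' hf't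
      refine ⟨s, g, hsub.trans ?_, hli', hg, hg0, hgsum.trans hsum⟩
      exact_mod_cast Finset.coe_subset.mpr (Finset.erase_subset w t)

end Carath


/-- The convex cone of all nonnegative real combinations of a finite set of integer vectors. -/
def coneOf {m : ℕ} (X : Finset (Fin m → ℤ)) : Set (Fin m → ℝ) :=
  {y | ∃ c : (Fin m → ℤ) → ℝ, (∀ v, 0 ≤ c v) ∧
    y = ∑ v ∈ X, c v • (fun i => (v i : ℝ))}

/-- If `−x ∈ cone(X \ {x})`, then there are nonnegative integer multipliers `λ`, with
`λ_x ≥ 1`, at most `m+1` nonzero entries, each bounded by `Δ^m · m^{m/2}`, such that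
`−λ_x x = Σ_{y ∈ X \ {x}} λ_y y`. -/
theorem integer_caratheodory (m Δ : ℕ) (hm : 1 ≤ m) (hΔ : 1 ≤ Δ)
    (X : Finset (Fin m → ℤ)) (hX : ∀ v ∈ X, ∀ i, |v i| ≤ (Δ : ℤ))
    (x : Fin m → ℤ) (hxX : x ∈ X)
    (hx : (fun i => (-(x i) : ℝ)) ∈ coneOf (X.erase x)) :
    ∃ lam : (Fin m → ℤ) → ℕ,
      1 ≤ lam x ∧
      (X.filter fun y => lam y ≠ 0).card ≤ m + 1 ∧
      (∀ y ∈ X, (lam y : ℝ) ≤ (Δ : ℝ) ^ m * (m : ℝ) ^ ((m : ℝ) / 2)) ∧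
      (-(lam x : ℤ)) • x = ∑ y ∈ X.erase x, (lam y : ℤ) • y := by
  classical
  obtain ⟨c, hc0, hcsum⟩ := hx
  set cf : (Fin m → ℤ) → (Fin m → ℝ) := fun v i => (v i : ℝ) with hcf
  have hcfinj : Function.Injective cf := by
    intro a b hab
    funext i
    exact Int.cast_injective (congrFun hab i)
  -- push the conic combination to the image finset
  set t : Finset (Fin m → ℝ) := (X.erase x).image cf with ht
  set f : (Fin m → ℝ) → ℝ :=
    fun w => ∑ v ∈ (X.erase x).filter (fun v => cf v = w), c v with hf
  have hf0 : ∀ w, 0 ≤ f w := fun w => Finset.sum_nonneg fun v _ => hc0 v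
  have hft : ∀ w ∉ t, f w = 0 := by
    intro w hw
    refine Finset.sum_eq_zero fun v hv => ?_
    obtain ⟨hv1, hv2⟩ := Finset.mem_filter.mp hv
    exact absurd (hv2 ▸ Finset.mem_image_of_mem cf hv1) hw
  have hxsum : ∑ w ∈ t, f w • w = (fun i => (-(x i) : ℝ)) := by
    rw [ht, Finset.sum_image (fun a _ b _ h => hcfinj h)]
    rw [hcsum]
    refine Finset.sum_congr rfl fun v hv => ?_
    congr 1
    show (∑ v' ∈ (X.erase x).filter (fun v' => cf v' = cf v), c v') = c v
    have hfe : (X.erase x).filter (fun v' => cf v' = cf v) = {v} := by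
      ext v'
      simp only [Finset.mem_filter, Finset.mem_singleton, hcfinj.eq_iff]
      exact ⟨fun h => h.2, fun h => ⟨h ▸ hv, h⟩⟩
    rw [hfe, Finset.sum_singleton]
  -- conic Caratheodory
  obtain ⟨s, g, hsub, hli, hg0, hgs, hgsum⟩ := carath_cone t.card t le_rfl f hf0 hft
  -- extend s to a basis using standard vectors
  obtain ⟨b, hbt, hsb, hbspan, hlib⟩ := exists_linearIndepOn_id_extension hli
    (Set.subset_union_left (t := Set.range (fun i : Fin m => Pi.single i (1 : ℝ))))
  have hlib : LinearIndependent ℝ ((↑) : ↥b → (Fin m → ℝ)) := hlib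
  have hspan_top : Submodule.span ℝ b = ⊤ := by
    refine le_antisymm le_top ?_
    rw [← (Pi.basisFun ℝ (Fin m)).span_eq]
    refine Submodule.span_le.mpr ?_
    rintro w ⟨i, rfl⟩
    have h1 : Pi.single i (1 : ℝ) ∈ Submodule.span ℝ b := hbspan (Or.inr ⟨i, rfl⟩)
    simpa [Pi.basisFun_apply] using h1
  have hbfin : b.Finite := LinearIndependent.setFinite hlib
  haveI := hbfin.fintype
  set B : Module.Basis ↥b ℝ (Fin m → ℝ) := Module.Basis.mk hlib
    (by rw [Subtype.range_coe]; exact hspan_top.ge) with hB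
  have hcard : Fintype.card ↥b = m := by
    have h1 := Module.finrank_eq_card_basis B
    rw [Module.finrank_pi, Fintype.card_fin] at h1
    omega
  set e : Fin m ≃ ↥b := (Fintype.equivFinOfCardEq hcard).symm with he
  -- integer preimages of the basis vectors
  have hpre : ∀ w : ↥b, ∃ z : Fin m → ℤ, cf z = ↑w ∧ (∀ i, |z i| ≤ (Δ : ℤ)) ∧
      ((w : Fin m → ℝ) ∈ s → z ∈ X.erase x) := by
    intro w
    by_cases hws : (w : Fin m → ℝ) ∈ s
    · have hwt : (w : Fin m → ℝ) ∈ t := hsub hws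
      obtain ⟨z, hz, hzw⟩ := Finset.mem_image.mp hwt
      exact ⟨z, hzw, fun i => hX z (Finset.mem_of_mem_erase hz) i, fun _ => hz⟩
    · rcases hbt w.2 with h | h
      · exact absurd (by exact_mod_cast h) hws
      · obtain ⟨i, hi⟩ := h
        refine ⟨Pi.single i 1, ?_, ?_, fun h' => absurd h' hws⟩
        · rw [← hi]
          funext j
          simp [Pi.single_apply, hcf, apply_ite]
        · intro j
          have h1 : (1 : ℤ) ≤ (Δ : ℤ) := by exact_mod_cast hΔ
          by_cases hji : j = i <;> simp [Pi.single_apply, hji] <;> omega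
  choose u hu1 hu2 hu3 using hpre
  set uu : Fin m → (Fin m → ℤ) := fun j => u (e j) with huu
  have huuinj : Function.Injective uu := by
    intro a b hab
    apply e.injective
    apply Subtype.ext
    rw [← hu1 (e a), ← hu1 (e b)]
    show cf (uu a) = cf (uu b)
    rw [hab]
  set NZ : Matrix (Fin m) (Fin m) ℤ := fun i j => uu j i with hNZ
  set NR : Matrix (Fin m) (Fin m) ℝ := NZ.map Int.cast with hNR
  have hcolapply : ∀ j i, NR i j = (e j : Fin m → ℝ) i := by
    intro j i
    rw [← hu1 (e j)]
    rfl
  have hNRb : ∀ (i j : Fin m), |NR i j| ≤ (Δ : ℝ) := by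
    intro i j
    have := hu2 (e j) i
    rw [hNR]
    show |((NZ i j : ℤ) : ℝ)| ≤ (Δ : ℝ)
    exact_mod_cast this
  have hmv : ∀ v : Fin m → ℝ, NR.mulVec v = ∑ j, v j • ((e j : Fin m → ℝ)) := by
    intro v
    funext i
    rw [Matrix.mulVec, dotProduct]
    rw [Finset.sum_apply]
    refine Finset.sum_congr rfl fun j _ => ?_
    rw [Pi.smul_apply, smul_eq_mul, hcolapply j i, mul_comm]
  have hlie : LinearIndependent ℝ (fun j : Fin m => ((e j : Fin m → ℝ))) :=
    hlib.comp e e.injective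
  have hdetR : NR.det ≠ 0 := by
    intro h0
    obtain ⟨v, hvne, hv0⟩ := (Matrix.exists_mulVec_eq_zero_iff).mpr h0
    have h1 := Fintype.linearIndependent_iff.mp hlie v (by rw [← hmv]; exact hv0)
    exact hvne (funext h1)
  have hinj : ∀ a b : Fin m → ℝ, NR.mulVec a = NR.mulVec b → a = b := by
    intro a b hab
    by_contra hne
    have h1 : NR.mulVec (a - b) = 0 := by rw [Matrix.mulVec_sub, hab, sub_self]
    exact hdetR ((Matrix.exists_mulVec_eq_zero_iff).mp ⟨a - b, sub_ne_zero.mpr hne, h1⟩)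
  -- the real solution vector
  set cv : Fin m → ℝ := fun j => g ((e j : Fin m → ℝ)) with hcv
  have hcv0 : ∀ j, 0 ≤ cv j := fun j => hg0 _
  have hNc : NR.mulVec cv = (fun i => (-(x i) : ℝ)) := by
    rw [hmv]
    have h1 : ∑ j, cv j • ((e j : Fin m → ℝ)) = ∑ w : ↥b, g ↑w • (↑w : Fin m → ℝ) :=
      Fintype.sum_equiv e _ _ (fun j => rfl)
    have h2 : ∑ w : ↥b, g ↑w • (↑w : Fin m → ℝ) = ∑ w ∈ hbfin.toFinset, g w • w := by
      rw [← Finset.sum_coe_sort hbfin.toFinset (fun w => g w • w)]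
      exact Fintype.sum_equiv (Equiv.subtypeEquivRight (fun v => hbfin.mem_toFinset.symm))
        _ _ (fun i => rfl)
    have h3 : ∑ w ∈ hbfin.toFinset, g w • w = ∑ w ∈ s, g w • w := by
      symm
      refine Finset.sum_subset (fun w hw => hbfin.mem_toFinset.mpr (hsb hw)) ?_
      intro w _ hws
      rw [hgs w hws, zero_smul]
    rw [h1, h2, h3, hgsum, hxsum]
  -- Cramer over the integers
  set bz : Fin m → ℤ := fun i => -(x i) with hbz
  set μ : Fin m → ℤ := NZ.cramer bz with hμ
  have hcram : NZ.mulVec μ = NZ.det • bz := Matrix.mulVec_cramer NZ bz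
  have hdetmap : NR.det = ((NZ.det : ℤ) : ℝ) := by
    have h1 : NR = (Int.castRingHom ℝ).mapMatrix NZ := rfl
    rw [h1, ← RingHom.map_det]
    rfl
  have hdetZ : NZ.det ≠ 0 := by
    intro h0
    apply hdetR
    rw [hdetmap, h0]
    simp
  have hcastmv : NR.mulVec (fun j => ((μ j : ℤ) : ℝ)) = fun i => (((NZ.mulVec μ) i : ℤ) : ℝ) := by
    funext i
    rw [Matrix.mulVec, dotProduct, Matrix.mulVec, dotProduct]
    push_cast
    rfl
  have hμℝ : (fun j => ((μ j : ℤ) : ℝ)) = fun j => ((NZ.det : ℤ) : ℝ) * cv j := by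
    apply hinj
    rw [hcastmv, hcram]
    have h2 : NR.mulVec (fun j => ((NZ.det : ℤ) : ℝ) * cv j) =
        ((NZ.det : ℤ) : ℝ) • (NR.mulVec cv) := by
      rw [← Matrix.mulVec_smul]
      rfl
    rw [h2, hNc]
    funext i
    show (((NZ.det • bz) i : ℤ) : ℝ) = ((NZ.det : ℤ) : ℝ) * -((x i : ℤ) : ℝ)
    rw [Pi.smul_apply, smul_eq_mul]
    simp only [hbz]
    push_cast
    ring
  have hμc : ∀ j, ((μ j : ℤ) : ℝ) = ((NZ.det : ℤ) : ℝ) * cv j := fun j => congrFun hμℝ j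
  -- sign normalization
  set ε : ℤ := if 0 < NZ.det then 1 else -1 with hε
  have hεdet : 0 < ε * NZ.det := by
    rcases (hdetZ : NZ.det ≠ 0).lt_or_gt with h | h
    · rw [hε, if_neg (by omega)]; omega
    · rw [hε, if_pos h]; omega
  have hεabs : ε * NZ.det = |NZ.det| := by
    rcases (hdetZ : NZ.det ≠ 0).lt_or_gt with h | h
    · rw [hε, if_neg (by omega), abs_of_neg h]; ring
    · rw [hε, if_pos h, abs_of_pos h]; ring
  have hεμ : ∀ j, 0 ≤ ε * μ j := by
    intro j
    have h1 : ((ε * μ j : ℤ) : ℝ) = ((ε * NZ.det : ℤ) : ℝ) * cv j := by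
      push_cast
      rw [mul_assoc]
      congr 1
      exact_mod_cast hμc j
    have h2 : (0 : ℝ) ≤ ((ε * NZ.det : ℤ) : ℝ) * cv j :=
      mul_nonneg (by exact_mod_cast hεdet.le) (hcv0 j)
    exact_mod_cast h1 ▸ h2
  have hμ0 : ∀ j, uu j ∉ X.erase x → μ j = 0 := by
    intro j hj
    have hcvj : cv j = 0 := by
      refine hgs _ fun hmem' => ?_
      exact hj (hu3 (e j) hmem')
    have := hμc j
    rw [hcvj, mul_zero] at this
    exact_mod_cast this
  -- definition of lam
  set lam : (Fin m → ℤ) → ℕ := fun y =>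
    if y = x then (ε * NZ.det).toNat
    else (∑ j ∈ Finset.univ.filter (fun j => uu j = y), ε * μ j).toNat with hlam
  have hlamx : lam x = (ε * NZ.det).toNat := by rw [hlam]; simp
  have hxnerase : ∀ y ∈ X.erase x, y ≠ x := fun y hy => (Finset.mem_erase.mp hy).1
  have hlamy : ∀ y, y ≠ x →
      (lam y : ℤ) = ∑ j ∈ Finset.univ.filter (fun j => uu j = y), ε * μ j := by
    intro y hy
    rw [hlam]
    simp only [if_neg hy]
    exact Int.toNat_of_nonneg (Finset.sum_nonneg fun j _ => hεμ j)
  refine ⟨lam, ?_, ?_, ?_, ?_⟩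
  · -- lam x ≥ 1
    rw [hlamx]
    omega
  · -- support bound
    have hss : X.filter (fun y => lam y ≠ 0) ⊆ insert x (Finset.univ.image uu) := by
      intro y hy
      obtain ⟨hyX, hyne⟩ := Finset.mem_filter.mp hy
      by_cases hyx : y = x
      · simp [hyx]
      · refine Finset.mem_insert.mpr (Or.inr ?_)
        by_contra hni
        apply hyne
        rw [hlam]
        simp only [if_neg hyx]
        have hempty : Finset.univ.filter (fun j => uu j = y) = ∅ := by
          refine Finset.filter_eq_empty_iff.mpr fun j _ => fun hj => ?_
          exact hni (Finset.mem_image.mpr ⟨j, Finset.mem_univ j, hj⟩)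
        rw [hempty]
        simp
    calc (X.filter fun y => lam y ≠ 0).card ≤ (insert x (Finset.univ.image uu)).card :=
          Finset.card_le_card hss
      _ ≤ (Finset.univ.image uu).card + 1 := Finset.card_insert_le _ _
      _ ≤ m + 1 := by
          have := Finset.card_image_le (s := (Finset.univ : Finset (Fin m))) (f := uu)
          simpa using Nat.add_le_add_right (by simpa using this) 1
  · -- magnitude bound
    intro y hyX
    have hRHS0 : (0:ℝ) ≤ (Δ : ℝ) ^ m * (m : ℝ) ^ ((m : ℝ) / 2) :=
      mul_nonneg (pow_nonneg (Nat.cast_nonneg Δ) m) (Real.rpow_nonneg (Nat.cast_nonneg m) _)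
    by_cases hyx : y = x
    · rw [hyx]
      have h1 : ((lam x : ℕ) : ℝ) = |NR.det| := by
        rw [hlamx, hdetmap]
        have h2 : ((ε * NZ.det).toNat : ℤ) = |NZ.det| := by
          rw [Int.toNat_of_nonneg hεdet.le, hεabs]
        have h3 : (((ε * NZ.det).toNat : ℕ) : ℝ) = ((|NZ.det| : ℤ) : ℝ) := by
          exact_mod_cast congrArg (fun z : ℤ => (z : ℝ)) h2
        rw [h3]
        push_cast
        simp
      rw [h1]
      exact hadamard_det_bound (by omega) NR (Δ : ℝ) hNRb
    · have hly : lam y = (∑ j ∈ Finset.univ.filter (fun j => uu j = y), ε * μ j).toNat := by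
        rw [hlam]
        simp only [if_neg hyx]
      by_cases hy : ∃ j, uu j = y
      · obtain ⟨j, hj⟩ := hy
        have hfe : Finset.univ.filter (fun j' => uu j' = y) = {j} := by
          ext j'
          simp only [Finset.mem_filter, Finset.mem_univ, true_and, Finset.mem_singleton]
          exact ⟨fun h' => huuinj (h'.trans hj.symm), fun h' => h' ▸ hj⟩
        have hεabs1 : |ε| = 1 := by
          rw [hε]
          split <;> simp
        set MR : Matrix (Fin m) (Fin m) ℝ := NR.updateCol j (fun i => ((bz i : ℤ) : ℝ))
          with hMR
        have h4 : MR = (NZ.updateCol j bz).map (Int.cast) := by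
          ext i' j'
          by_cases hj' : j' = j <;>
            simp [hMR, Matrix.updateCol_apply, hj', Matrix.map_apply, hNR]
        have hMRdet : MR.det = (((NZ.updateCol j bz).det : ℤ) : ℝ) := by
          have h5 : MR = (Int.castRingHom ℝ).mapMatrix (NZ.updateCol j bz) := h4
          rw [h5, ← RingHom.map_det]
          rfl
        have h5 : |MR.det| ≤ (Δ : ℝ) ^ m * (m : ℝ) ^ ((m : ℝ) / 2) := by
          refine hadamard_det_bound (by omega) MR (Δ : ℝ) ?_
          intro i' j'
          by_cases hj' : j' = j
          · rw [hMR]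
            rw [Matrix.updateCol_apply]
            rw [if_pos hj']
            have h6 := hX x hxX i'
            have h7 : |bz i'| ≤ (Δ : ℤ) := by
              rw [hbz]
              simpa using h6
            exact_mod_cast h7
          · rw [hMR, Matrix.updateCol_apply, if_neg hj']
            exact hNRb i' j'
        have h8 : ((lam y : ℕ) : ℝ) ≤ |MR.det| := by
          have h9 : (lam y : ℤ) = ε * μ j := by
            rw [hly, hfe, Finset.sum_singleton]
            exact Int.toNat_of_nonneg (hεμ j)
          have h10 : (lam y : ℤ) ≤ |μ j| := by
            rw [h9]
            calc ε * μ j ≤ |ε * μ j| := le_abs_self _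
              _ = |ε| * |μ j| := abs_mul _ _
              _ = |μ j| := by rw [hεabs1, one_mul]
          have h11 : μ j = (NZ.updateCol j bz).det := by
            rw [hμ]
            exact Matrix.cramer_apply NZ bz j
          rw [hMRdet, ← h11]
          have h12 : ((lam y : ℤ) : ℝ) ≤ ((|μ j| : ℤ) : ℝ) := by exact_mod_cast h10
          calc ((lam y : ℕ) : ℝ) = (((lam y : ℤ) : ℤ) : ℝ) := by push_cast; ring
            _ ≤ ((|μ j| : ℤ) : ℝ) := h12
            _ = |((μ j : ℤ) : ℝ)| := by push_cast; ring
        exact h8.trans h5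
      · push_neg at hy
        have hempty : Finset.univ.filter (fun j' => uu j' = y) = ∅ :=
          Finset.filter_eq_empty_iff.mpr fun j _ => hy j
        rw [hly, hempty]
        simpa using hRHS0
  · -- the linear identity
    have hlamxZ : (lam x : ℤ) = ε * NZ.det := by
      rw [hlamx]
      exact Int.toNat_of_nonneg hεdet.le
    have hkey : ∀ i', (∑ j, NR i' j * ((μ j : ℤ) : ℝ))
        = ((NZ.det : ℤ) : ℝ) * (-((x i' : ℤ) : ℝ)) := by
      intro i'
      have h1 := congrFun hcastmv i'
      rw [hcram] at h1
      have h2 : (NR.mulVec fun j => ((μ j : ℤ) : ℝ)) i' = ∑ j, NR i' j * ((μ j : ℤ) : ℝ) := by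
        rw [Matrix.mulVec, dotProduct]
      rw [h2] at h1
      rw [h1]
      show (((NZ.det • bz) i' : ℤ) : ℝ) = _
      rw [Pi.smul_apply, smul_eq_mul]
      simp only [hbz]
      push_cast
      ring
    have hmainR : ∑ j : Fin m, (ε * μ j) • uu j = (-(ε * NZ.det)) • x := by
      funext i
      apply (Int.cast_injective (α := ℝ))
      show (((∑ j, (ε * μ j) • uu j) i : ℤ) : ℝ) = (((-(ε * NZ.det)) • x) i : ℝ)
      have hL : (((∑ j, (ε * μ j) • uu j) i : ℤ) : ℝ)
          = (ε : ℝ) * ∑ j, NR i j * ((μ j : ℤ) : ℝ) := by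
        rw [Finset.sum_apply, Int.cast_sum, Finset.mul_sum]
        refine Finset.sum_congr rfl fun j _ => ?_
        rw [show NR i j = ((uu j i : ℤ) : ℝ) from rfl, Pi.smul_apply, smul_eq_mul]
        push_cast
        ring
      have hR : ((((-(ε * NZ.det)) • x) i : ℤ) : ℝ)
          = (ε : ℝ) * (((NZ.det : ℤ) : ℝ) * (-((x i : ℤ) : ℝ))) := by
        show (((-(ε * NZ.det)) * x i : ℤ) : ℝ) = _
        push_cast
        ring
      rw [hL, hR, hkey i]
    have hR2 : ∑ y ∈ X.erase x, (lam y : ℤ) • y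
        = ∑ y ∈ X.erase x, ∑ j ∈ (Finset.univ.filter
            (fun j => uu j ∈ X.erase x)).filter (fun j => uu j = y), (ε * μ j) • uu j := by
      refine Finset.sum_congr rfl fun y hy => ?_
      rw [hlamy y (hxnerase y hy), Finset.sum_smul]
      have hff : Finset.univ.filter (fun j => uu j = y)
          = (Finset.univ.filter (fun j => uu j ∈ X.erase x)).filter (fun j => uu j = y) := by
        ext j
        simp only [Finset.mem_filter, Finset.mem_univ, true_and]
        exact ⟨fun h => ⟨h ▸ hy, h⟩, fun h => h.2⟩
      rw [hff]
      refine Finset.sum_congr rfl fun j hj => ?_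
      rw [(Finset.mem_filter.mp hj).2]
    have hfib := Finset.sum_fiberwise_of_maps_to
      (t := X.erase x) (g := uu) (s := Finset.univ.filter (fun j => uu j ∈ X.erase x))
      (fun j hj => (Finset.mem_filter.mp hj).2) (fun j => (ε * μ j) • uu j)
    have hext : ∑ j ∈ Finset.univ.filter (fun j => uu j ∈ X.erase x), (ε * μ j) • uu j
        = ∑ j : Fin m, (ε * μ j) • uu j := by
      refine Finset.sum_subset (Finset.filter_subset _ _) ?_
      intro j _ hj
      have hj2 : uu j ∉ X.erase x := by
        intro hmem
        exact hj (Finset.mem_filter.mpr ⟨Finset.mem_univ j, hmem⟩)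
      rw [hμ0 j hj2, mul_zero, zero_smul]
    rw [hR2, hfib, hext, hmainR, hlamxZ]
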